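/- Let f = x1³ + x2²x3 ∈ ℂ[x1,x2,x3]. The point (3,2,2) ∈ ℂ³ lies in the Minkowski sum V(f)* + Sing(f) (indeed (3,2,2) = (3,2,1) + (0,0,1) with (3,2,1) ∈ V(f)* and (0,0,1) ∈ Sing(f)), but (3,2,2) does not lie in the ED data singular locus DS(f). Hence the inclusion DS(f) ⊆ V(f)* + Sing(f) is strict for this f. -/

import Mathlib

open MvPolynomial Pointwise

/-- Gradient of a multivariate polynomial at a point. -/
noncomputable def grad {n : ℕ} (f : MvPolynomial (Fin n) ℂ) (x : Fin n → ℂ) : Fin n → ℂ :=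
  fun i => eval x (pderiv i f)

/-- Zariski closure: zero locus of the ideal of all polynomials vanishing on `S`. -/
def zclosure {σ : Type} (S : Set (σ → ℂ)) : Set (σ → ℂ) :=
  {x | ∀ p : MvPolynomial σ ℂ, (∀ s ∈ S, eval s p = 0) → eval x p = 0}

/-- Zero locus `V(f)`. -/
def Vp {n : ℕ} (f : MvPolynomial (Fin n) ℂ) : Set (Fin n → ℂ) := {x | eval x f = 0}

/-- Regular locus. -/
def RegL {n : ℕ} (f : MvPolynomial (Fin n) ℂ) : Set (Fin n → ℂ) :=
  {x | eval x f = 0 ∧ grad f x ≠ 0}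

/-- Singular locus. -/
def SingL {n : ℕ} (f : MvPolynomial (Fin n) ℂ) : Set (Fin n → ℂ) :=
  {x | eval x f = 0 ∧ grad f x = 0}

/-- ED correspondence: Zariski closure of pairs (u,x), x regular, u - x ∈ ℂ·∇f(x),
encoded as functions on `Fin n ⊕ Fin n`. -/
def EDcorr {n : ℕ} (f : MvPolynomial (Fin n) ℂ) : Set ((Fin n ⊕ Fin n) → ℂ) :=
  zclosure {w | ∃ u x : Fin n → ℂ, w = Sum.elim u x ∧ x ∈ RegL f ∧ ∃ t : ℂ, u - x = t • grad f x}

/-- ED data singular locus. -/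
def DS {n : ℕ} (f : MvPolynomial (Fin n) ℂ) : Set (Fin n → ℂ) :=
  {u | ∃ x, Sum.elim u x ∈ EDcorr f ∧ x ∈ SingL f}

/-- Dual variety. -/
def dualV {n : ℕ} (f : MvPolynomial (Fin n) ℂ) : Set (Fin n → ℂ) :=
  zclosure {y | ∃ (t : ℂ) (x : Fin n → ℂ), x ∈ RegL f ∧ y = t • grad f x}

/-- Isotropic quadric. -/
def isoQ (n : ℕ) : Set (Fin n → ℂ) := {x | ∑ i, (x i) ^ 2 = 0}

/-- ED data isotropic locus. -/
def DI {n : ℕ} (f : MvPolynomial (Fin n) ℂ) : Set (Fin n → ℂ) :=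
  {u | ∃ x, Sum.elim u x ∈ EDcorr f ∧ x ∈ isoQ n ∩ Vp f}

/-- Zariski-closed sets. -/
def IsZClosed {σ : Type} (S : Set (σ → ℂ)) : Prop := zclosure S = S

/-- Irreducibility with respect to Zariski-closed sets. -/
def IsZIrreducible {σ : Type} (S : Set (σ → ℂ)) : Prop :=
  S.Nonempty ∧ ∀ C₁ C₂ : Set (σ → ℂ), IsZClosed C₁ → IsZClosed C₂ →
    S ⊆ C₁ ∪ C₂ → S ⊆ C₁ ∨ S ⊆ C₂

/-- `C` is an irreducible component of `S`. -/
def IsIrredComponentOf {σ : Type} (C S : Set (σ → ℂ)) : Prop :=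
  C ⊆ S ∧ IsZClosed C ∧ IsZIrreducible C ∧
    ∀ C' : Set (σ → ℂ), IsZClosed C' → IsZIrreducible C' → C ⊆ C' → C' ⊆ S → C' = C


noncomputable abbrev fcub : MvPolynomial (Fin 3) ℂ := X 0 ^ 3 + X 1 ^ 2 * X 2

lemma eval_fcub (x : Fin 3 → ℂ) : eval x fcub = x 0 ^ 3 + x 1 ^ 2 * x 2 := by simp

lemma grad_fcub (x : Fin 3 → ℂ) : grad fcub x = ![3 * x 0 ^ 2, 2 * (x 1 * x 2), x 1 ^ 2] := by
  funext i
  fin_cases i <;> simp [grad, pderiv_X, Pi.single_apply] <;> ring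

lemma mem_zclosure_self {σ : Type} {S : Set (σ → ℂ)} {x : σ → ℂ} (hx : x ∈ S) :
    x ∈ zclosure S := fun p hp => hp x hx

lemma mem_dualV_param (t : ℂ) (x : Fin 3 → ℂ) (hf : eval x fcub = 0) (hg : grad fcub x ≠ 0)
    {y : Fin 3 → ℂ} (hy : y = t • grad fcub x) : y ∈ dualV fcub :=
  mem_zclosure_self ⟨t, x, ⟨hf, hg⟩, hy⟩

lemma grad_ne_of_x1 {x : Fin 3 → ℂ} (h : x 1 ≠ 0) : grad fcub x ≠ 0 := by
  rw [grad_fcub]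
  intro hg
  have := congrFun hg 2
  simp at this
  exact h (by simpa [pow_eq_zero_iff] using this)

lemma sing_mem (c : ℂ) : (![0, 0, c] : Fin 3 → ℂ) ∈ SingL fcub := by
  constructor
  · simp [eval_fcub]
  · rw [grad_fcub]; funext i; fin_cases i <;> simp
lemma eval_aeval_poly {σ : Type} (g : σ → Polynomial ℂ) (p : MvPolynomial σ ℂ) (ε : ℂ) :
    Polynomial.eval ε (MvPolynomial.aeval g p) = eval (fun i => (g i).eval ε) p := by
  induction p using MvPolynomial.induction_on with
  | C a => simp
  | add p q hp hq => simp [hp, hq]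
  | mul_X p i hp => simp [hp]
example : ({0}ᶜ : Set ℂ).Infinite := Set.Finite.infinite_compl (Set.finite_singleton 0)

lemma limit_mem (lam : ℂ) : (![0, lam, 0] : Fin 3 → ℂ) ∈ dualV fcub := by
  by_cases hl : lam = 0
  · subst hl
    refine mem_dualV_param 0 ![(-1), 1, 1] (by simp [eval_fcub]; norm_num) (grad_ne_of_x1 (by norm_num)) ?_
    funext i; fin_cases i <;> simp
  · set k : ℂ := -2 / lam with hk
    have hkne : k ≠ 0 := by
      rw [hk]; exact div_ne_zero (by norm_num) hl
    intro p hp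
    set g : Fin 3 → Polynomial ℂ :=
      ![Polynomial.C 3 * Polynomial.X, Polynomial.C lam, Polynomial.C (k ^ 2) * Polynomial.X ^ 3]
      with hg
    have hQ : (MvPolynomial.aeval g p : Polynomial ℂ) = 0 := by
      apply Polynomial.eq_zero_of_infinite_isRoot
      apply Set.Infinite.mono (s := {(0:ℂ)}ᶜ) ?_
        ((Set.finite_singleton (0:ℂ)).infinite_compl)
      intro ε hε
      have hεne : ε ≠ 0 := hε
      show Polynomial.IsRoot _ ε
      unfold Polynomial.IsRoot
      rw [eval_aeval_poly]
      apply hp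
      refine ⟨ε⁻¹ ^ 3, ![ε ^ 2, k * ε ^ 3, -(1 / k ^ 2)], ⟨?_, ?_⟩, ?_⟩
      · rw [eval_fcub]; simp only [Matrix.cons_val_zero, Matrix.cons_val_one, Matrix.head_cons,
          Matrix.cons_val_two, Matrix.tail_cons]
        field_simp
        ring
      · apply grad_ne_of_x1
        simp only [Matrix.cons_val_one, Matrix.head_cons]
        exact mul_ne_zero hkne (pow_ne_zero _ hεne)
      · rw [grad_fcub]
        funext i
        fin_cases i <;>
          simp [hg, Pi.smul_apply, smul_eq_mul] <;> field_simp [hk] <;> ring <;> rw [hk] <;> field_simp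
    have := congrArg (Polynomial.eval 0) hQ
    rw [eval_aeval_poly] at this
    have h0 : (fun i => Polynomial.eval 0 (g i)) = (![0, lam, 0] : Fin 3 → ℂ) := by
      funext i; fin_cases i <;> simp [hg]
    rw [h0] at this
    simpa using this

lemma dual_cone_mem (z : Fin 3 → ℂ) (hz : 4 * z 0 ^ 3 = 27 * z 1 ^ 2 * z 2) :
    z ∈ dualV fcub := by
  by_cases h2 : z 2 = 0
  · have h0 : z 0 = 0 := by
      have h4 : z 0 ^ 3 = 0 := by
        have h3 : (4 : ℂ) * z 0 ^ 3 = 0 := by rw [hz, h2]; ring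
        simpa using h3
      exact pow_eq_zero_iff (by norm_num : (3:ℕ) ≠ 0) |>.mp h4
    have hzeq : z = ![0, z 1, 0] := by
      funext i; fin_cases i <;> simp [h0, h2]
    rw [hzeq]; exact limit_mem _
  · obtain ⟨b, hb⟩ := IsAlgClosed.exists_pow_nat_eq (k := ℂ) (z 2) (n := 2) (by norm_num)
    have hbne : b ≠ 0 := by
      intro h; apply h2; rw [← hb, h]; ring
    set c : ℂ := z 1 / (2 * b) with hc
    have key : ∃ a : ℂ, a ^ 2 = z 0 / 3 ∧ a ^ 3 = -(z 1 * b) / 2 := by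
      by_cases h0 : z 0 = 0
      · have h1 : z 1 = 0 := by
          have hh : (27 : ℂ) * z 1 ^ 2 * z 2 = 0 := by rw [← hz, h0]; ring
          rcases mul_eq_zero.mp hh with h | h
          · rcases mul_eq_zero.mp h with h' | h'
            · norm_num at h'
            · exact pow_eq_zero_iff (by norm_num : (2:ℕ) ≠ 0) |>.mp h'
          · exact absurd h h2
        exact ⟨0, by simp [h0], by simp [h1]⟩
      · obtain ⟨a0, ha0⟩ := IsAlgClosed.exists_pow_nat_eq (k := ℂ) (z 0 / 3) (n := 2) (by norm_num)
        have hsq : (a0 ^ 3) ^ 2 = (-(z 1 * b) / 2) ^ 2 := by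
          linear_combination (a0 ^ 4 + a0 ^ 2 * z 0 / 3 + z 0 ^ 2 / 9) * ha0
            + (1 / 108 : ℂ) * hz + (-(z 1 ^ 2) / 4) * hb
        rcases sq_eq_sq_iff_eq_or_eq_neg.mp hsq with h | h
        · exact ⟨a0, ha0, h⟩
        · exact ⟨-a0, by linear_combination ha0, by linear_combination -h⟩
    obtain ⟨a, ha2, ha3⟩ := key
    refine mem_dualV_param 1 ![a, b, c] ?_ (grad_ne_of_x1 (by simpa using hbne)) ?_
    · rw [eval_fcub]
      simp only [Matrix.cons_val_zero, Matrix.cons_val_one, Matrix.head_cons,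
        Matrix.cons_val_two, Matrix.tail_cons]
      rw [hc]
      field_simp
      linear_combination 2 * ha3
    · rw [grad_fcub, one_smul]
      funext i
      fin_cases i
      · show z 0 = 3 * a ^ 2
        linear_combination (-3 : ℂ) * ha2
      · show z 1 = 2 * (b * c)
        rw [hc]; field_simp
      · show z 2 = b ^ 2
        rw [hb]

noncomputable abbrev P1 : MvPolynomial (Fin 3 ⊕ Fin 3) ℂ :=
  X (Sum.inr 0) * (X (Sum.inl 0) - X (Sum.inr 0)) +
  X (Sum.inr 1) * (X (Sum.inl 1) - X (Sum.inr 1)) +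
  X (Sum.inr 2) * (X (Sum.inl 2) - X (Sum.inr 2))

noncomputable abbrev P4 : MvPolynomial (Fin 3 ⊕ Fin 3) ℂ :=
  4 * (X (Sum.inl 0) - X (Sum.inr 0)) ^ 3 -
  27 * (X (Sum.inl 1) - X (Sum.inr 1)) ^ 2 * (X (Sum.inl 2) - X (Sum.inr 2))

lemma eval_P1 (u x : Fin 3 → ℂ) : eval (Sum.elim u x) P1 =
    x 0 * (u 0 - x 0) + x 1 * (u 1 - x 1) + x 2 * (u 2 - x 2) := by simp

lemma eval_P4 (u x : Fin 3 → ℂ) : eval (Sum.elim u x) P4 =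
    4 * (u 0 - x 0) ^ 3 - 27 * (u 1 - x 1) ^ 2 * (u 2 - x 2) := by simp

lemma hyp_components {u x : Fin 3 → ℂ} {t : ℂ} (ht : u - x = t • grad fcub x) :
    u 0 - x 0 = t * (3 * x 0 ^ 2) ∧ u 1 - x 1 = t * (2 * (x 1 * x 2)) ∧
    u 2 - x 2 = t * x 1 ^ 2 := by
  rw [grad_fcub] at ht
  refine ⟨?_, ?_, ?_⟩
  · simpa using congrFun ht 0
  · simpa using congrFun ht 1
  · simpa using congrFun ht 2

lemma van_P1 : ∀ w ∈ {w | ∃ u x : Fin 3 → ℂ, w = Sum.elim u x ∧ x ∈ RegL fcub ∧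
    ∃ t : ℂ, u - x = t • grad fcub x}, eval w P1 = 0 := by
  rintro w ⟨u, x, rfl, ⟨hf, -⟩, t, ht⟩
  obtain ⟨h0, h1, h2⟩ := hyp_components ht
  rw [eval_fcub] at hf
  rw [eval_P1]
  linear_combination x 0 * h0 + x 1 * h1 + x 2 * h2 + 3 * t * hf

lemma van_P4 : ∀ w ∈ {w | ∃ u x : Fin 3 → ℂ, w = Sum.elim u x ∧ x ∈ RegL fcub ∧
    ∃ t : ℂ, u - x = t • grad fcub x}, eval w P4 = 0 := by
  rintro w ⟨u, x, rfl, ⟨hf, -⟩, t, ht⟩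
  obtain ⟨h0, h1, h2⟩ := hyp_components ht
  rw [eval_fcub] at hf
  rw [eval_P4]
  have e0 : u 0 = x 0 + t * (3 * x 0 ^ 2) := by linear_combination h0
  have e1 : u 1 = x 1 + t * (2 * (x 1 * x 2)) := by linear_combination h1
  have e2 : u 2 = x 2 + t * x 1 ^ 2 := by linear_combination h2
  rw [e0, e1, e2]
  linear_combination (108 * t ^ 3 * (x 0 ^ 3 - x 1 ^ 2 * x 2)) * hf

lemma sing_coords {x : Fin 3 → ℂ} (hx : x ∈ SingL fcub) : x 0 = 0 ∧ x 1 = 0 := by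
  obtain ⟨-, hg⟩ := hx
  rw [grad_fcub] at hg
  have h1 : x 1 = 0 := by
    have h := congrFun hg 2
    simp at h
    exact h
  have h0 : x 0 = 0 := by
    have h : (3 : ℂ) * x 0 ^ 2 = 0 := by
      simpa only [Matrix.cons_val_zero, Pi.zero_apply] using congrFun hg 0
    have h2 := (mul_eq_zero.mp h).resolve_left (by norm_num)
    exact pow_eq_zero_iff (by norm_num : (2 : ℕ) ≠ 0) |>.mp h2
  exact ⟨h0, h1⟩

theorem DS_cuspidal_cubic_strict' :
    (![3, 2, 1] : Fin 3 → ℂ) ∈ dualV fcub ∧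
    (![0, 0, 1] : Fin 3 → ℂ) ∈ SingL fcub ∧
    (![3, 2, 2] : Fin 3 → ℂ) ∈ dualV fcub + SingL fcub ∧
    (![3, 2, 2] : Fin 3 → ℂ) ∉ DS fcub ∧
    DS fcub ⊂ dualV fcub + SingL fcub := by
  have m1 : (![3, 2, 1] : Fin 3 → ℂ) ∈ dualV fcub := by
    refine mem_dualV_param 1 ![(-1), 1, 1] (by simp [eval_fcub]; norm_num)
      (grad_ne_of_x1 (by norm_num)) ?_
    rw [grad_fcub, one_smul]
    funext i; fin_cases i <;> norm_num [Matrix.cons_val_two, Matrix.tail_cons, Matrix.head_cons]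
  have m2 : (![0, 0, 1] : Fin 3 → ℂ) ∈ SingL fcub := sing_mem 1
  have m3 : (![3, 2, 2] : Fin 3 → ℂ) ∈ dualV fcub + SingL fcub := by
    have h : (![3, 2, 2] : Fin 3 → ℂ) = ![3, 2, 1] + ![0, 0, 1] := by
      funext i; fin_cases i <;> norm_num
    rw [h]; exact Set.add_mem_add m1 m2
  have m4 : (![3, 2, 2] : Fin 3 → ℂ) ∉ DS fcub := by
    rintro ⟨x, hE, hx⟩
    obtain ⟨h0, h1⟩ := sing_coords hx
    have e1 := hE P1 van_P1
    have e4 := hE P4 van_P4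
    rw [eval_P1] at e1
    rw [eval_P4] at e4
    have hu0 : (![3, 2, 2] : Fin 3 → ℂ) 0 = 3 := rfl
    have hu1 : (![3, 2, 2] : Fin 3 → ℂ) 1 = 2 := rfl
    have hu2 : (![3, 2, 2] : Fin 3 → ℂ) 2 = 2 := rfl
    rw [hu0, hu1, hu2, h0, h1] at e1 e4
    have hx2 : x 2 = 1 := by linear_combination (1 / 108 : ℂ) * e4
    rw [hx2] at e1
    norm_num at e1
  have hsub : DS fcub ⊆ dualV fcub + SingL fcub := by
    rintro u ⟨x, hE, hx⟩
    obtain ⟨h0, h1⟩ := sing_coords hx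
    have e1 := hE P1 van_P1
    have e4 := hE P4 van_P4
    rw [eval_P1] at e1
    rw [eval_P4] at e4
    have e1' : x 2 * (u 2 - x 2) = 0 := by
      linear_combination e1 - (u 0 - x 0) * h0 - (u 1 - x 1) * h1
    have e4' : 4 * u 0 ^ 3 = 27 * u 1 ^ 2 * (u 2 - x 2) := by
      linear_combination e4 + (4 * (u 0 ^ 2 + u 0 * (u 0 - x 0) + (u 0 - x 0) ^ 2)) * h0
        - (27 * ((u 1 - x 1) + u 1) * (u 2 - x 2)) * h1
    by_cases hc : x 2 = 0
    · have hdual : u ∈ dualV fcub := dual_cone_mem u (by rw [hc] at e4'; linear_combination e4')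
      have h : u = u + ![0, 0, 0] := by funext i; fin_cases i <;> simp
      rw [h]
      exact Set.add_mem_add hdual (sing_mem 0)
    · have hu2 : u 2 = x 2 := by
        rcases mul_eq_zero.mp e1' with h | h
        · exact absurd h hc
        · linear_combination h
      have hu0 : u 0 = 0 := by
        have h3 : u 0 ^ 3 = 0 := by
          have : (4 : ℂ) * u 0 ^ 3 = 0 := by rw [e4', hu2]; ring
          simpa using this
        exact pow_eq_zero_iff (by norm_num : (3 : ℕ) ≠ 0) |>.mp h3
      have h : u = ![0, u 1, 0] + ![0, 0, x 2] := by
        funext i; fin_cases i <;> simp [hu0, hu2]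
      rw [h]
      exact Set.add_mem_add (limit_mem (u 1)) (sing_mem (x 2))
  exact ⟨m1, m2, m3, m4, (Set.ssubset_iff_of_subset hsub).mpr ⟨_, m3, m4⟩⟩


/-- For the cuspidal cubic cone `f = x₁³ + x₂²x₃`: the point `(3,2,2) = (3,2,1) + (0,0,1)` lies in
`V(f)* + Sing(f)` but not in `DS(f)`; hence the inclusion `DS(f) ⊆ V(f)* + Sing(f)` is strict. -/
theorem DS_cuspidal_cubic_strict :
    (![3, 2, 1] : Fin 3 → ℂ) ∈ dualV (X 0 ^ 3 + X 1 ^ 2 * X 2 : MvPolynomial (Fin 3) ℂ) ∧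
    (![0, 0, 1] : Fin 3 → ℂ) ∈ SingL (X 0 ^ 3 + X 1 ^ 2 * X 2 : MvPolynomial (Fin 3) ℂ) ∧
    (![3, 2, 2] : Fin 3 → ℂ) ∈
      dualV (X 0 ^ 3 + X 1 ^ 2 * X 2 : MvPolynomial (Fin 3) ℂ) +
        SingL (X 0 ^ 3 + X 1 ^ 2 * X 2 : MvPolynomial (Fin 3) ℂ) ∧
    (![3, 2, 2] : Fin 3 → ℂ) ∉ DS (X 0 ^ 3 + X 1 ^ 2 * X 2 : MvPolynomial (Fin 3) ℂ) ∧
    DS (X 0 ^ 3 + X 1 ^ 2 * X 2 : MvPolynomial (Fin 3) ℂ) ⊂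
      dualV (X 0 ^ 3 + X 1 ^ 2 * X 2 : MvPolynomial (Fin 3) ℂ) +
        SingL (X 0 ^ 3 + X 1 ^ 2 * X 2 : MvPolynomial (Fin 3) ℂ) :=
  DS_cuspidal_cubic_strict'
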